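/- Let X be a finite δ-hyperbolic ν-geodesic metric space. Then for every t ≥ 4δ+2ν, the Vietoris–Rips complex VR_t(X) is contractible (indeed, collapsible to a point). -/

import Mathlib

def IsDeltaHyperbolic (X : Type*) [MetricSpace X] (δ : ℝ) : Prop :=
  ∀ w x y z : X,
    dist w x + dist y z ≤ max (dist w y + dist x z) (dist w z + dist x y) + 2 * δ

def IsGeodesicWithDefect (X : Type*) [MetricSpace X] (ν : ℝ) : Prop :=
  ∀ x y : X, ∀ r s : ℝ, 0 ≤ r → 0 ≤ s → r + s = dist x y →
    ∃ z : X, dist x z ≤ r + ν ∧ dist y z ≤ s + ν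

/-- The Vietoris–Rips complex at threshold `t`: nonempty finite subsets of
diameter at most `t`. -/
def VRComplex (X : Type*) [MetricSpace X] (t : ℝ) : Set (Finset X) :=
  {σ | σ.Nonempty ∧ ∀ x ∈ σ, ∀ y ∈ σ, dist x y ≤ t}

/-- An elementary collapse removes a free pair `(σ, τ)`: `σ` is a facet of `τ` and
`τ` is the unique proper coface of `σ`. -/
def ElemCollapse {X : Type*} (K L : Set (Finset X)) : Prop :=
  ∃ σ τ : Finset X, σ ∈ K ∧ τ ∈ K ∧ σ ⊂ τ ∧ σ.card + 1 = τ.card ∧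
    (∀ ρ ∈ K, σ ⊂ ρ → ρ = τ) ∧ L = K \ {σ, τ}

/-- A collapse is a finite sequence of elementary collapses. -/
def Collapses {X : Type*} (K L : Set (Finset X)) : Prop :=
  Relation.ReflTransGen ElemCollapse K L

/-- Collapsing away the open star of a vertex `x` dominated by `z`. -/
lemma collapse_star {X : Type*} [Fintype X] [DecidableEq X] {x z : X} (hxz : x ≠ z) :
    ∀ n : ℕ, ∀ K : Set (Finset X),
      {σ | σ ∈ K ∧ x ∈ σ}.ncard ≤ n →
      (∀ σ ∈ K, x ∈ σ → z ∉ σ → insert z σ ∈ K) →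
      (∀ σ ∈ K, x ∈ σ → z ∈ σ → σ.erase z ∈ K) →
      Collapses K {σ | σ ∈ K ∧ x ∉ σ} := by
  intro n
  induction n with
  | zero =>
    intro K hcard _ _
    have hemp : {σ | σ ∈ K ∧ x ∈ σ} = ∅ :=
      (Set.ncard_eq_zero (Set.toFinite _)).mp (Nat.le_zero.mp hcard)
    have : {σ | σ ∈ K ∧ x ∉ σ} = K := by
      ext σ
      constructor
      · exact fun h => h.1
      · intro h
        refine ⟨h, fun hx => ?_⟩
        have : σ ∈ ({} : Set (Finset X)) := hemp ▸ (⟨h, hx⟩ : σ ∈ {σ | σ ∈ K ∧ x ∈ σ})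
        exact this.elim
    rw [this]
    exact Relation.ReflTransGen.refl
  | succ n ih =>
    intro K hcard h1 h2
    by_cases hA : {σ | σ ∈ K ∧ x ∈ σ} = ∅
    · have : {σ | σ ∈ K ∧ x ∉ σ} = K := by
        ext σ
        constructor
        · exact fun h => h.1
        · intro h
          refine ⟨h, fun hx => ?_⟩
          have : σ ∈ ({} : Set (Finset X)) := hA ▸ (⟨h, hx⟩ : σ ∈ {σ | σ ∈ K ∧ x ∈ σ})
          exact this.elim
      rw [this]
      exact Relation.ReflTransGen.refl
    · obtain ⟨σ0, hσ0K, hσ0x⟩ := Set.nonempty_iff_ne_empty.mpr hA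
      -- B : simplices containing x but not z
      have hBne : {σ | σ ∈ K ∧ x ∈ σ ∧ z ∉ σ}.Nonempty := by
        by_cases hz : z ∈ σ0
        · refine ⟨σ0.erase z, h2 σ0 hσ0K hσ0x hz, Finset.mem_erase.mpr ⟨hxz, hσ0x⟩,
            Finset.notMem_erase _ _⟩
        · exact ⟨σ0, hσ0K, hσ0x, hz⟩
      obtain ⟨σ₁, hσ₁, hσ₁max⟩ := Set.Finite.exists_maximalFor Finset.card
        {σ | σ ∈ K ∧ x ∈ σ ∧ z ∉ σ} (Set.toFinite _) hBne
      obtain ⟨hσ₁K, hσ₁x, hσ₁z⟩ := hσ₁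
      set τ₁ : Finset X := insert z σ₁ with hτ₁def
      have hτ₁K : τ₁ ∈ K := h1 σ₁ hσ₁K hσ₁x hσ₁z
      have hxτ₁ : x ∈ τ₁ := Finset.mem_insert_of_mem hσ₁x
      have huniq : ∀ ρ ∈ K, σ₁ ⊂ ρ → ρ = τ₁ := by
        intro ρ hρK hss
        have hxρ : x ∈ ρ := hss.1 hσ₁x
        by_cases hzρ : z ∈ ρ
        · have hρ' : ρ.erase z ∈ K := h2 ρ hρK hxρ hzρ
          have hsub : σ₁ ⊆ ρ.erase z := Finset.subset_erase.mpr ⟨hss.1, hσ₁z⟩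
          by_cases heq : σ₁ = ρ.erase z
          · rw [hτ₁def, heq, Finset.insert_erase hzρ]
          · exfalso
            have hss2 : σ₁ ⊂ ρ.erase z := ⟨hsub, fun h => heq (le_antisymm hsub h)⟩
            have hlt := Finset.card_lt_card hss2
            have := hσ₁max (j := ρ.erase z)
              ⟨hρ', Finset.mem_erase.mpr ⟨hxz, hxρ⟩, Finset.notMem_erase _ _⟩ hlt.le
            omega
        · exfalso
          have hlt := Finset.card_lt_card hss
          have := hσ₁max (j := ρ) ⟨hρK, hxρ, hzρ⟩ hlt.le
          omega
      have hstep : ElemCollapse K (K \ {σ₁, τ₁}) :=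
        ⟨σ₁, τ₁, hσ₁K, hτ₁K, Finset.ssubset_insert hσ₁z,
          (Finset.card_insert_of_notMem hσ₁z).symm, huniq, rfl⟩
      set K' := K \ {σ₁, τ₁} with hK'def
      have hmemK' : ∀ σ, σ ∈ K' ↔ σ ∈ K ∧ σ ≠ σ₁ ∧ σ ≠ τ₁ := by
        intro σ
        simp [hK'def, Set.mem_diff, not_or]
      have hcard' : {σ | σ ∈ K' ∧ x ∈ σ}.ncard ≤ n := by
        have hss : {σ | σ ∈ K' ∧ x ∈ σ} ⊂ {σ | σ ∈ K ∧ x ∈ σ} := by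
          constructor
          · intro σ hσ
            exact ⟨((hmemK' σ).mp hσ.1).1, hσ.2⟩
          · intro h
            have : σ₁ ∈ {σ | σ ∈ K' ∧ x ∈ σ} := h ⟨hσ₁K, hσ₁x⟩
            exact (((hmemK' σ₁).mp this.1).2.1) rfl
        have := Set.ncard_lt_ncard hss (Set.toFinite _)
        omega
      have h1' : ∀ σ ∈ K', x ∈ σ → z ∉ σ → insert z σ ∈ K' := by
        intro σ hσ hx hz
        obtain ⟨hσK, hne1, hne2⟩ := (hmemK' σ).mp hσ
        refine (hmemK' _).mpr ⟨h1 σ hσK hx hz, ?_, ?_⟩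
        · intro h
          exact hσ₁z (h ▸ Finset.mem_insert_self z σ)
        · intro h
          apply hne1
          have := congrArg (Finset.erase · z) h
          simpa [hτ₁def, Finset.erase_insert hz, Finset.erase_insert hσ₁z] using this
      have h2' : ∀ σ ∈ K', x ∈ σ → z ∈ σ → σ.erase z ∈ K' := by
        intro σ hσ hx hz
        obtain ⟨hσK, hne1, hne2⟩ := (hmemK' σ).mp hσ
        refine (hmemK' _).mpr ⟨h2 σ hσK hx hz, ?_, ?_⟩
        · intro h
          apply hne2
          rw [← Finset.insert_erase hz, h]
        · intro h
          exact (Finset.notMem_erase z σ) (h ▸ Finset.mem_insert_self z σ₁)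
      have hrec := ih K' hcard' h1' h2'
      have htarget : {σ | σ ∈ K' ∧ x ∉ σ} = {σ | σ ∈ K ∧ x ∉ σ} := by
        ext σ
        constructor
        · intro h
          exact ⟨((hmemK' σ).mp h.1).1, h.2⟩
        · intro h
          refine ⟨(hmemK' σ).mpr ⟨h.1, ?_, ?_⟩, h.2⟩
          · intro he; exact h.2 (he ▸ hσ₁x)
          · intro he; exact h.2 (he ▸ hxτ₁)
      rw [htarget] at hrec
      exact Relation.ReflTransGen.head hstep hrec

section Geometry

variable {X : Type*} [MetricSpace X] [Fintype X]

/-- The key geometric step: a farthest point `x` is dominated by some other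
point `z` of `S`. -/
lemma exists_dominator {δ ν t : ℝ} (hδ : 0 ≤ δ) (hν : 0 ≤ ν)
    (hhyp : IsDeltaHyperbolic X δ) (hgeo : IsGeodesicWithDefect X ν)
    (ht : 4 * δ + 2 * ν ≤ t) (p : X) (S : Finset X) (hpS : p ∈ S)
    (hinv : ∀ y : X, y ∉ S → ∀ s ∈ S, dist p s ≤ dist p y)
    {x : X} (hxS : x ∈ S) (hmax : ∀ s ∈ S, dist p s ≤ dist p x)
    (hxp : dist p x ≠ 0) :
    ∃ z ∈ S, z ≠ x ∧ dist x z ≤ t ∧ ∀ y ∈ S, dist x y ≤ t → dist z y ≤ t := by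
  classical
  set M := dist p x with hM
  have hM0 : 0 < M := lt_of_le_of_ne dist_nonneg (Ne.symm hxp)
  by_cases hMt : M ≤ t
  · refine ⟨p, hpS, ?_, ?_, ?_⟩
    · intro h; exact hxp (by rw [hM, h, dist_self])
    · rw [dist_comm]; exact hMt
    · intro y hy _
      exact (hmax y hy).trans hMt
  · push_neg at hMt
    -- finiteness rounding
    set G : Finset ℝ := (Finset.univ.image fun q : X × X => dist q.1 q.2).filter (fun d => t < d)
      with hG
    have hGne : G.Nonempty := by
      refine ⟨M, Finset.mem_filter.mpr ⟨Finset.mem_image.mpr ⟨(p, x), Finset.mem_univ _, rfl⟩, hMt⟩⟩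
    set ε0 : ℝ := G.min' hGne - t with hε0
    have hε0pos : 0 < ε0 := by
      have := Finset.mem_filter.mp (G.min'_mem hGne)
      simp only [hε0]; linarith [this.2]
    set ε : ℝ := min ε0 (M - t) / 2 with hε
    have hεpos : 0 < ε := by
      apply div_pos _ (by norm_num)
      exact lt_min hε0pos (by linarith)
    have hεlt : ε < ε0 := by
      have h1 : min ε0 (M - t) ≤ ε0 := min_le_left _ _
      have := hε0pos
      rw [hε]; linarith
    have hround : ∀ a b : X, dist a b ≤ t + ε → dist a b ≤ t := by
      intro a b hab
      by_contra h
      push_neg at h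
      have hmem : dist a b ∈ G := Finset.mem_filter.mpr
        ⟨Finset.mem_image.mpr ⟨(a, b), Finset.mem_univ _, rfl⟩, h⟩
      have := G.min'_le _ hmem
      have : t + ε0 ≤ dist a b := by rw [hε0] at *; linarith
      linarith
    -- geodesic point
    set r : ℝ := 2 * δ + ν + ε with hr
    have hrnn : 0 ≤ r := by positivity
    have hε2 : ε ≤ (M - t) / 2 := by
      rw [hε]
      have : min ε0 (M - t) ≤ M - t := min_le_right _ _
      linarith
    have hsnn : 0 ≤ M - r := by
      rw [hr]
      have : 2 * δ + ν ≤ t := by linarith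
      linarith
    obtain ⟨z, hxz, hpz⟩ := hgeo x p r (M - r) hrnn hsnn (by rw [dist_comm, ← hM]; ring)
    have hpz' : dist p z ≤ M - 2 * δ - ε := by
      have h' : M - r + ν = M - 2 * δ - ε := by rw [hr]; ring
      rw [h'] at hpz; exact hpz
    have hpzM : dist p z < M := by linarith
    have hzS : z ∈ S := by
      by_contra h
      have := hinv z h x hxS
      rw [← hM] at this
      linarith
    have hzx : z ≠ x := by
      intro h
      rw [h, ← hM] at hpzM
      exact lt_irrefl _ hpzM
    have hxz2 : dist x z ≤ 2 * δ + 2 * ν + ε := by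
      have h' : r + ν = 2 * δ + 2 * ν + ε := by rw [hr]; ring
      rw [h'] at hxz; exact hxz
    have hdxz : dist x z ≤ t := by
      apply hround
      linarith
    refine ⟨z, hzS, hzx, hdxz, ?_⟩
    intro y hyS hxy
    rw [dist_comm]
    apply hround
    have hyp : dist y p ≤ M := by rw [dist_comm]; exact hmax y hyS
    have hh := hhyp y z x p
    have hzp : dist z p ≤ M - 2 * δ - ε := by rw [dist_comm]; exact hpz'
    have hyx : dist y x ≤ t := by rw [dist_comm]; exact hxy
    have hzx' : dist z x ≤ 2 * δ + 2 * ν + ε := by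
      rw [dist_comm]; exact hxz2
    have hxpM : dist x p = M := by rw [dist_comm, hM]
    rcases max_cases (dist y x + dist z p) (dist y p + dist z x) with ⟨heq, _⟩ | ⟨heq, _⟩ <;>
      rw [heq] at hh <;> rw [hxpM] at hh <;> linarith

/-- Main induction: the Rips complex on a "distance-downward-closed" subset
`S` collapses to the base point. -/
lemma collapses_to_point [DecidableEq X] {δ ν t : ℝ} (hδ : 0 ≤ δ) (hν : 0 ≤ ν)
    (hhyp : IsDeltaHyperbolic X δ) (hgeo : IsGeodesicWithDefect X ν)
    (ht : 4 * δ + 2 * ν ≤ t) (p : X) :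
    ∀ n : ℕ, ∀ S : Finset X, S.card ≤ n → p ∈ S →
      (∀ y : X, y ∉ S → ∀ s ∈ S, dist p s ≤ dist p y) →
      Collapses {σ : Finset X | σ.Nonempty ∧ σ ⊆ S ∧ ∀ a ∈ σ, ∀ b ∈ σ, dist a b ≤ t} {{p}} := by
  have ht0 : 0 ≤ t := by linarith
  intro n
  induction n with
  | zero =>
    intro S hcard hpS _
    exact absurd (Finset.card_pos.mpr ⟨p, hpS⟩) (by omega)
  | succ n ih =>
    intro S hcard hpS hinv
    by_cases hS : S = {p}
    · have : {σ : Finset X | σ.Nonempty ∧ σ ⊆ S ∧ ∀ a ∈ σ, ∀ b ∈ σ, dist a b ≤ t}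
          = ({{p}} : Set (Finset X)) := by
        ext σ
        constructor
        · rintro ⟨hne, hsub, _⟩
          have := (Finset.subset_singleton_iff.mp (hS ▸ hsub))
          rcases this with h | h
          · exact absurd h hne.ne_empty
          · exact h
        · rintro rfl
          refine ⟨⟨p, Finset.mem_singleton_self p⟩, by rw [hS], ?_⟩
          intro a ha b hb
          rw [Finset.mem_singleton] at ha hb
          rw [ha, hb, dist_self]
          exact ht0
      rw [this]
      exact Relation.ReflTransGen.refl
    · obtain ⟨x, hxS, hmax⟩ := S.exists_max_image (fun s => dist p s) ⟨p, hpS⟩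
      have hxp0 : dist p x ≠ 0 := by
        intro h0
        apply hS
        apply Finset.Subset.antisymm
        · intro s hs
          have : dist p s ≤ 0 := h0 ▸ hmax s hs
          have : dist p s = 0 := le_antisymm this dist_nonneg
          rw [Finset.mem_singleton]
          exact (dist_eq_zero.mp this).symm
        · exact Finset.singleton_subset_iff.mpr hpS
      have hxp : x ≠ p := fun h => hxp0 (by rw [h, dist_self])
      obtain ⟨z, hzS, hzx, hdxz, hdom⟩ :=
        exists_dominator hδ hν hhyp hgeo ht p S hpS hinv hxS hmax hxp0
      set K : Set (Finset X) :=
        {σ : Finset X | σ.Nonempty ∧ σ ⊆ S ∧ ∀ a ∈ σ, ∀ b ∈ σ, dist a b ≤ t} with hK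
      have h1 : ∀ σ ∈ K, x ∈ σ → z ∉ σ → insert z σ ∈ K := by
        rintro σ ⟨hne, hsub, hpair⟩ hx _
        refine ⟨Finset.insert_nonempty _ _, Finset.insert_subset hzS hsub, ?_⟩
        intro a ha b hb
        rw [Finset.mem_insert] at ha hb
        rcases ha with rfl | ha <;> rcases hb with rfl | hb
        · rw [dist_self]; exact ht0
        · exact hdom b (hsub hb) (hpair x hx b hb)
        · rw [dist_comm]; exact hdom a (hsub ha) (hpair x hx a ha)
        · exact hpair a ha b hb
      have h2 : ∀ σ ∈ K, x ∈ σ → z ∈ σ → σ.erase z ∈ K := by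
        rintro σ ⟨hne, hsub, hpair⟩ hx hz
        refine ⟨⟨x, Finset.mem_erase.mpr ⟨fun h => hzx h.symm, hx⟩⟩,
          (Finset.erase_subset _ _).trans hsub, ?_⟩
        intro a ha b hb
        exact hpair a (Finset.mem_of_mem_erase ha) b (Finset.mem_of_mem_erase hb)
      have hcoll := collapse_star (fun h => hzx h.symm) ({σ | σ ∈ K ∧ x ∈ σ}.ncard) K
        le_rfl h1 h2
      have htarget : {σ | σ ∈ K ∧ x ∉ σ} =
          {σ : Finset X | σ.Nonempty ∧ σ ⊆ S.erase x ∧ ∀ a ∈ σ, ∀ b ∈ σ, dist a b ≤ t} := by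
        ext σ
        constructor
        · rintro ⟨⟨hne, hsub, hpair⟩, hx⟩
          exact ⟨hne, Finset.subset_erase.mpr ⟨hsub, hx⟩, hpair⟩
        · rintro ⟨hne, hsub, hpair⟩
          have := Finset.subset_erase.mp hsub
          exact ⟨⟨hne, this.1, hpair⟩, this.2⟩
      rw [htarget] at hcoll
      have hrec := ih (S.erase x) (by
          have := Finset.card_erase_of_mem hxS
          have := Finset.card_pos.mpr ⟨p, hpS⟩
          omega)
        (Finset.mem_erase.mpr ⟨fun h => hxp h.symm, hpS⟩)
        (by
          intro y hy s hs
          rw [Finset.mem_erase] at hy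
          push_neg at hy
          by_cases hyS : y ∈ S
          · have hyx : y = x := by
              by_contra hne
              exact absurd hyS (by simpa [hne] using hy hne)
            rw [hyx]
            exact hmax s (Finset.mem_of_mem_erase hs)
          · exact hinv y hyS s (Finset.mem_of_mem_erase hs))
      exact Relation.ReflTransGen.trans hcoll hrec

end Geometry

/-- Generalized contractibility lemma: for a finite `δ`-hyperbolic `ν`-geodesic
metric space and `t ≥ 4δ + 2ν`, the Vietoris–Rips complex `VR_t(X)` is
collapsible to a point (in particular contractible). -/
theorem stmt8 (X : Type*) [MetricSpace X] [Fintype X] [Nonempty X]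
    (δ ν t : ℝ) (hδ : 0 ≤ δ) (hν : 0 ≤ ν)
    (hhyp : IsDeltaHyperbolic X δ) (hgeo : IsGeodesicWithDefect X ν)
    (ht : 4 * δ + 2 * ν ≤ t) :
    ∃ p : X, Collapses (VRComplex X t) {{p}} := by
  classical
  obtain ⟨p⟩ := ‹Nonempty X›
  refine ⟨p, ?_⟩
  have h := collapses_to_point hδ hν hhyp hgeo ht p (Fintype.card X) Finset.univ
    (by simp) (Finset.mem_univ p) (by intro y hy; exact absurd (Finset.mem_univ y) hy)
  have : VRComplex X t
      = {σ : Finset X | σ.Nonempty ∧ σ ⊆ Finset.univ ∧ ∀ a ∈ σ, ∀ b ∈ σ, dist a b ≤ t} := by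
    ext σ
    simp [VRComplex, Finset.subset_univ]
  rw [this]
  exact h
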